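/- Any radially symmetric function ω: ℝⁿ → ℝ that is twice differentiable everywhere and whose Laplacian is continuous on ℝⁿ must be C² on ℝⁿ. -/

import Mathlib

open Filter Topology Metric Set

noncomputable def pd {n : ℕ} (i : Fin n) (f : EuclideanSpace ℝ (Fin n) → ℝ)
    (x : EuclideanSpace ℝ (Fin n)) : ℝ :=
  fderiv ℝ f x (EuclideanSpace.single i 1)

noncomputable def spd {n : ℕ} (i j : Fin n) (f : EuclideanSpace ℝ (Fin n) → ℝ)
    (x : EuclideanSpace ℝ (Fin n)) : ℝ :=
  pd i (pd j f) x

noncomputable def lap {n : ℕ} (f : EuclideanSpace ℝ (Fin n) → ℝ)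
    (x : EuclideanSpace ℝ (Fin n)) : ℝ :=
  ∑ i, spd i i f x

def TwiceDiffAt {n : ℕ} (f : EuclideanSpace ℝ (Fin n) → ℝ)
    (p : EuclideanSpace ℝ (Fin n)) : Prop :=
  (∀ᶠ x in 𝓝 p, DifferentiableAt ℝ f x) ∧
  DifferentiableAt ℝ (fderiv ℝ f) p ∧
  Tendsto (fun x => (f x - f p - fderiv ℝ f p (x - p)
      - (1/2) * fderiv ℝ (fderiv ℝ f) p (x - p) (x - p)) / ‖x - p‖^2)
    (𝓝[≠] p) (𝓝 0)

local notation "⟪" x ", " y "⟫" => @inner ℝ _ _ x y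

section General

variable {E : Type*} [NormedAddCommGroup E] [InnerProductSpace ℝ E]

lemma tangent_deriv_zero {h : E → ℝ} {x w : E} (hx : x ≠ 0)
    (hrad : ∀ y, ‖y‖ = ‖x‖ → h y = h x)
    (hd : DifferentiableAt ℝ h x) (hw : ⟪x, w⟫ = 0) :
    fderiv ℝ h x w = 0 := by
  rcases eq_or_ne w 0 with rfl | hw0
  · simp
  set k : ℝ := ‖x‖ / ‖w‖ with hk
  have hkpos : 0 < k := div_pos (norm_pos_iff.2 hx) (norm_pos_iff.2 hw0)
  set c : ℝ → E := fun t => Real.cos t • x + (k * Real.sin t) • w with hc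
  have hnorm : ∀ t, ‖c t‖ = ‖x‖ := by
    intro t
    have h1 : ⟪Real.cos t • x, (k * Real.sin t) • w⟫ = 0 := by
      rw [real_inner_smul_left, real_inner_smul_right, hw]; ring
    have hkw : k * ‖w‖ = ‖x‖ := div_mul_cancel₀ _ (norm_ne_zero_iff.2 hw0)
    have h2 : ‖c t‖ ^ 2 = ‖x‖ ^ 2 := by
      rw [hc, norm_add_sq_real, h1, norm_smul, norm_smul]
      simp only [Real.norm_eq_abs, mul_pow, sq_abs, abs_mul]
      have hkw2 : k ^ 2 * ‖w‖ ^ 2 = ‖x‖ ^ 2 := by rw [← hkw]; ring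
      nlinarith [Real.sin_sq_add_cos_sq t, hkw2]
    rw [← Real.sqrt_sq (norm_nonneg (c t)), h2, Real.sqrt_sq (norm_nonneg x)]
  have hc0 : c 0 = x := by simp [hc]
  have hcd : HasDerivAt c (k • w) 0 := by
    have d1 : HasDerivAt (fun t => Real.cos t • x) ((-Real.sin 0) • x) 0 :=
      (Real.hasDerivAt_cos 0).smul_const x
    have d2 : HasDerivAt (fun t => (k * Real.sin t) • w) ((k * Real.cos 0) • w) 0 :=
      ((Real.hasDerivAt_sin 0).const_mul k).smul_const w
    exact (d1.add d2).congr_deriv (by simp)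
  have hconst : (fun t => h (c t)) = fun _ => h x := by
    funext t; exact hrad _ (hnorm t)
  have hcomp : HasDerivAt (fun t => h (c t)) (fderiv ℝ h x (k • w)) 0 := by
    have h3 : HasFDerivAt h (fderiv ℝ h x) (c 0) := by rw [hc0]; exact hd.hasFDerivAt
    simpa [Function.comp_def] using h3.comp_hasDerivAt 0 hcd
  have : fderiv ℝ h x (k • w) = 0 := by
    rw [hconst] at hcomp
    exact hcomp.unique (hasDerivAt_const 0 (h x))
  rw [map_smul] at this
  rcases smul_eq_zero.1 this with h' | h'
  · exact absurd h' (ne_of_gt hkpos)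
  · exact h'

lemma radial_fderiv_apply {h : E → ℝ} {x : E} (hx : x ≠ 0)
    (hrad : ∀ y, ‖y‖ = ‖x‖ → h y = h x)
    (hd : DifferentiableAt ℝ h x) (v : E) :
    fderiv ℝ h x v = (⟪x, v⟫ / ‖x‖ ^ 2) * fderiv ℝ h x x := by
  set a : ℝ := ⟪x, v⟫ / ‖x‖ ^ 2 with ha
  have hxn : ‖x‖ ^ 2 ≠ 0 := pow_ne_zero _ (norm_ne_zero_iff.2 hx)
  have hw : ⟪x, v - a • x⟫ = 0 := by
    rw [inner_sub_right, real_inner_smul_right, real_inner_self_eq_norm_sq]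
    rw [ha, div_mul_cancel₀ _ hxn, sub_self]
  have h0 := tangent_deriv_zero hx hrad hd hw
  have : fderiv ℝ h x v = fderiv ℝ h x (a • x) + fderiv ℝ h x (v - a • x) := by
    rw [← map_add]; congr 1; abel
  rw [this, h0, map_smul, add_zero, smul_eq_mul]

end General

section Radial

variable {n : ℕ} {ω : EuclideanSpace ℝ (Fin n) → ℝ} {ψ : ℝ → ℝ}

lemma deriv_along_ray (hψ : ∀ x, ω x = ψ ‖x‖) (hdiff : Differentiable ℝ ω)
    {x : EuclideanSpace ℝ (Fin n)} (hx : x ≠ 0) :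
    HasDerivAt (fun t : ℝ => ψ (‖x‖ + t)) (fderiv ℝ ω x x / ‖x‖) 0 := by
  set r := ‖x‖ with hr
  have hrpos : 0 < r := norm_pos_iff.2 hx
  have hline : HasDerivAt (fun t : ℝ => (1 + t / r) • x) ((1 / r) • x) 0 := by
    have : HasDerivAt (fun t : ℝ => 1 + t / r) (1 / r) 0 := by
      simpa using (hasDerivAt_id (0:ℝ)).div_const r |>.const_add 1
    exact this.smul_const x
  have hcomp : HasDerivAt (fun t : ℝ => ω ((1 + t / r) • x))
      (fderiv ℝ ω x ((1 / r) • x)) 0 := by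
    have h3 : HasFDerivAt ω (fderiv ℝ ω x) ((fun t : ℝ => (1 + t / r) • x) 0) := by
      simpa using (hdiff x).hasFDerivAt
    simpa [Function.comp_def] using h3.comp_hasDerivAt 0 hline
  have heq : (fun t : ℝ => ω ((1 + t / r) • x)) =ᶠ[𝓝 (0:ℝ)] fun t => ψ (r + t) := by
    filter_upwards [eventually_gt_nhds (neg_lt_zero.2 hrpos)] with t ht
    have h1 : (0:ℝ) < 1 + t / r := by
      have h2 : -1 < t / r := by rw [lt_div_iff₀ hrpos, neg_one_mul]; exact ht
      linarith
    rw [hψ, norm_smul]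
    congr 1
    rw [Real.norm_eq_abs, abs_of_pos h1]
    field_simp
    rw [← hr]; ring
  have := hcomp.congr_of_eventuallyEq heq.symm
  simpa [map_smul, smul_eq_mul, div_eq_mul_inv, mul_comm] using this

/-- The normalized radial derivative `F`. -/
noncomputable def Fr {n : ℕ} (ω : EuclideanSpace ℝ (Fin n) → ℝ)
    (y : EuclideanSpace ℝ (Fin n)) : ℝ :=
  fderiv ℝ ω y y / ‖y‖ ^ 2

lemma Fr_radial (hψ : ∀ x, ω x = ψ ‖x‖) (hdiff : Differentiable ℝ ω)
    {x y : EuclideanSpace ℝ (Fin n)} (hx : x ≠ 0) (he : ‖y‖ = ‖x‖) :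
    Fr ω y = Fr ω x := by
  have hy : y ≠ 0 := by
    intro h; rw [h] at he; simp at he; exact hx (norm_eq_zero.1 he.symm)
  have h1 := deriv_along_ray hψ hdiff hx
  have h2 := deriv_along_ray hψ hdiff hy
  rw [he] at h2
  have h3 := h2.unique h1
  have hxn : ‖x‖ ≠ 0 := norm_ne_zero_iff.2 hx
  unfold Fr
  rw [he, pow_two, ← div_div, ← div_div, h3]

lemma grad_form (hψ : ∀ x, ω x = ψ ‖x‖) (hdiff : Differentiable ℝ ω)
    {x : EuclideanSpace ℝ (Fin n)} (hx : x ≠ 0) (v : EuclideanSpace ℝ (Fin n)) :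
    fderiv ℝ ω x v = Fr ω x * ⟪x, v⟫ := by
  have hrad : ∀ y, ‖y‖ = ‖x‖ → ω y = ω x := fun y hy => by rw [hψ, hψ, hy]
  rw [radial_fderiv_apply hx hrad (hdiff x) v]
  unfold Fr; ring

lemma grad_zero (hψ : ∀ x, ω x = ψ ‖x‖) (hdiff : Differentiable ℝ ω) :
    fderiv ℝ ω 0 = 0 := by
  have hneg : ω = fun y => ω (-y) := funext fun y => by rw [hψ, hψ, norm_neg]
  have h1 : HasFDerivAt (fun y : EuclideanSpace ℝ (Fin n) => ω (-y))
      ((fderiv ℝ ω 0).comp (-(ContinuousLinearMap.id ℝ _))) 0 := by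
    have hn : HasFDerivAt (fun y : EuclideanSpace ℝ (Fin n) => -y)
        (-(ContinuousLinearMap.id ℝ _)) 0 := by
      exact (hasFDerivAt_id (0 : EuclideanSpace ℝ (Fin n))).neg
    have hω : HasFDerivAt ω (fderiv ℝ ω 0) ((fun y : EuclideanSpace ℝ (Fin n) => -y) 0) := by
      simpa using (hdiff 0).hasFDerivAt
    simpa [Function.comp_def] using hω.comp 0 hn
  have h4 : fderiv ℝ (fun y : EuclideanSpace ℝ (Fin n) => ω (-y)) 0 = fderiv ℝ ω 0 := by
    rw [← hneg]
  have h3 := h4.symm.trans h1.fderiv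
  ext v
  have := congrArg (fun L => L v) h3
  simp only [ContinuousLinearMap.comp_apply, ContinuousLinearMap.neg_apply,
    ContinuousLinearMap.id_apply, map_neg] at this
  simp only [ContinuousLinearMap.zero_apply]
  linarith

end Radial

section Hessian

variable {n : ℕ} {ω : EuclideanSpace ℝ (Fin n) → ℝ} {ψ : ℝ → ℝ}

/-- The real inner product, bundled as a continuous bilinear map. -/
noncomputable def rinnerSL (n : ℕ) :
    EuclideanSpace ℝ (Fin n) →L[ℝ] EuclideanSpace ℝ (Fin n) →L[ℝ] ℝ := innerSL ℝ

@[simp] lemma rinnerSL_apply (x y : EuclideanSpace ℝ (Fin n)) :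
    rinnerSL n x y = ⟪x, y⟫ := rfl

lemma Fr_diffAt (hg : Differentiable ℝ (fderiv ℝ ω))
    {x : EuclideanSpace ℝ (Fin n)} (hx : x ≠ 0) :
    DifferentiableAt ℝ (Fr ω) x := by
  have h : Fr ω = fun y => fderiv ℝ ω y y / ⟪y, y⟫ := by
    funext y; rw [Fr, real_inner_self_eq_norm_sq]
  rw [h]
  have hinner : ⟪x, x⟫ ≠ 0 := by
    rw [real_inner_self_eq_norm_sq]; exact pow_ne_zero _ (norm_ne_zero_iff.2 hx)
  have h1 : DifferentiableAt ℝ (fun y : EuclideanSpace ℝ (Fin n) => fderiv ℝ ω y y) x :=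
    (hg x).clm_apply differentiableAt_id
  have h2 : DifferentiableAt ℝ (fun y : EuclideanSpace ℝ (Fin n) => ⟪y, y⟫) x :=
    differentiableAt_id.inner ℝ differentiableAt_id
  have h3 : (fun y : EuclideanSpace ℝ (Fin n) => fderiv ℝ ω y y / ⟪y, y⟫)
      = fun y => fderiv ℝ ω y y * (⟪y, y⟫)⁻¹ := by
    funext y; rw [div_eq_mul_inv]
  rw [h3]
  exact h1.mul (h2.inv hinner)

lemma hessian_inter (hψ : ∀ x, ω x = ψ ‖x‖) (hdiff : Differentiable ℝ ω)
    (hg : Differentiable ℝ (fderiv ℝ ω))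
    {x : EuclideanSpace ℝ (Fin n)} (hx : x ≠ 0) (u v : EuclideanSpace ℝ (Fin n)) :
    fderiv ℝ (fderiv ℝ ω) x u v
      = fderiv ℝ (Fr ω) x u * ⟪x, v⟫ + Fr ω x * ⟪u, v⟫ := by
  have hFd := Fr_diffAt hg hx
  have hev : fderiv ℝ ω =ᶠ[𝓝 x] fun y => Fr ω y • (rinnerSL n y) := by
    filter_upwards [IsOpen.mem_nhds isOpen_compl_singleton hx] with y hy
    ext w
    simp only [ContinuousLinearMap.smul_apply, rinnerSL_apply, smul_eq_mul]
    exact grad_form hψ hdiff hy w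
  rw [hev.fderiv_eq]
  have hs : HasFDerivAt (fun y => Fr ω y • (rinnerSL n y))
      (Fr ω x • rinnerSL n + (fderiv ℝ (Fr ω) x).smulRight (rinnerSL n x)) x :=
    hFd.hasFDerivAt.smul (rinnerSL n).hasFDerivAt
  rw [hs.fderiv]
  simp only [ContinuousLinearMap.add_apply, ContinuousLinearMap.smul_apply,
    ContinuousLinearMap.smulRight_apply, rinnerSL_apply, smul_eq_mul]
  ring

lemma lap_eq_trace (hg : Differentiable ℝ (fderiv ℝ ω)) (x : EuclideanSpace ℝ (Fin n)) :
    lap ω x = ∑ i, fderiv ℝ (fderiv ℝ ω) x (EuclideanSpace.single i 1)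
      (EuclideanSpace.single i 1) := by
  unfold lap spd pd
  refine Finset.sum_congr rfl fun i _ => ?_
  rw [fderiv_clm_apply (hg x) (differentiableAt_const _)]
  simp

lemma sum_inner_single_sq (x : EuclideanSpace ℝ (Fin n)) :
    ∑ i, ⟪x, EuclideanSpace.single i 1⟫ * ⟪x, EuclideanSpace.single i 1⟫ = ‖x‖ ^ 2 := by
  rw [← real_inner_self_eq_norm_sq]
  rw [PiLp.inner_apply]
  refine Finset.sum_congr rfl fun i _ => ?_
  simp [EuclideanSpace.inner_single_right, RCLike.inner_apply]
  ring

lemma hessian_final (hψ : ∀ x, ω x = ψ ‖x‖) (hdiff : Differentiable ℝ ω)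
    (hg : Differentiable ℝ (fderiv ℝ ω))
    {x : EuclideanSpace ℝ (Fin n)} (hx : x ≠ 0) (u v : EuclideanSpace ℝ (Fin n)) :
    fderiv ℝ (fderiv ℝ ω) x u v
      = ((lap ω x - n * Fr ω x) / ‖x‖ ^ 2) * (⟪x, u⟫ * ⟪x, v⟫) + Fr ω x * ⟪u, v⟫ := by
  have hxn : ‖x‖ ^ 2 ≠ 0 := pow_ne_zero _ (norm_ne_zero_iff.2 hx)
  have hFrad : ∀ y, ‖y‖ = ‖x‖ → Fr ω y = Fr ω x := fun y hy => Fr_radial hψ hdiff hx hy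
  have hFd := Fr_diffAt hg hx
  have hdF : ∀ w, fderiv ℝ (Fr ω) x w = (⟪x, w⟫ / ‖x‖ ^ 2) * fderiv ℝ (Fr ω) x x :=
    fun w => radial_fderiv_apply hx hFrad hFd w
  have htrace : lap ω x = fderiv ℝ (Fr ω) x x + n * Fr ω x := by
    rw [lap_eq_trace hg x]
    have hsingle : ∀ i : Fin n, ⟪(EuclideanSpace.single i 1 :
        EuclideanSpace ℝ (Fin n)), EuclideanSpace.single i 1⟫ = (1:ℝ) := by
      intro i
      rw [real_inner_self_eq_norm_sq, EuclideanSpace.norm_single]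
      norm_num
    have h5 : ∀ i : Fin n, fderiv ℝ (fderiv ℝ ω) x (EuclideanSpace.single i 1)
        (EuclideanSpace.single i 1)
        = (⟪x, EuclideanSpace.single i 1⟫ * ⟪x, EuclideanSpace.single i 1⟫)
            * (fderiv ℝ (Fr ω) x x / ‖x‖ ^ 2) + Fr ω x := by
      intro i
      rw [hessian_inter hψ hdiff hg hx, hdF, hsingle i]
      ring
    rw [Finset.sum_congr rfl fun i _ => h5 i, Finset.sum_add_distrib,
      ← Finset.sum_mul, sum_inner_single_sq, Finset.sum_const, Finset.card_univ,
      Fintype.card_fin, nsmul_eq_mul]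
    field_simp
  have hdFx : fderiv ℝ (Fr ω) x x = lap ω x - n * Fr ω x := by linarith
  rw [hessian_inter hψ hdiff hg hx, hdF u, hdFx]
  ring

end Hessian

section Zero

variable {n : ℕ} {ω : EuclideanSpace ℝ (Fin n) → ℝ} {ψ : ℝ → ℝ}

lemma hessian_zero_offdiag (hψ : ∀ x, ω x = ψ ‖x‖) (hdiff : Differentiable ℝ ω)
    (hg : Differentiable ℝ (fderiv ℝ ω)) {u v : EuclideanSpace ℝ (Fin n)}
    (huv : ⟪u, v⟫ = 0) :
    fderiv ℝ (fderiv ℝ ω) 0 u v = 0 := by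
  rcases eq_or_ne u 0 with rfl | hu
  · simp
  have hline : HasDerivAt (fun t : ℝ => t • u) u 0 := by
    simpa using (hasDerivAt_id (0:ℝ)).smul_const u
  have hcomp : HasDerivAt (fun t : ℝ => fderiv ℝ ω (t • u))
      (fderiv ℝ (fderiv ℝ ω) 0 u) 0 := by
    have h3 : HasFDerivAt (fderiv ℝ ω) (fderiv ℝ (fderiv ℝ ω) 0)
        ((fun t : ℝ => t • u) 0) := by
      simpa using (hg 0).hasFDerivAt
    simpa [Function.comp_def] using h3.comp_hasDerivAt 0 hline
  have happ : HasDerivAt (fun t : ℝ => fderiv ℝ ω (t • u) v)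
      (fderiv ℝ (fderiv ℝ ω) 0 u v) 0 := by
    have h4 := (ContinuousLinearMap.apply ℝ ℝ v).hasFDerivAt.comp_hasDerivAt 0 hcomp
    simpa [Function.comp_def] using h4
  have hzero : (fun t : ℝ => fderiv ℝ ω (t • u) v) = fun _ => 0 := by
    funext t
    rcases eq_or_ne t 0 with rfl | ht
    · simp [grad_zero hψ hdiff]
    · have htu : t • u ≠ 0 := smul_ne_zero ht hu
      rw [grad_form hψ hdiff htu, real_inner_smul_left, huv]
      ring
  rw [hzero] at happ
  exact happ.unique (hasDerivAt_const 0 0)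

lemma hessian_zero_eq (hn : 1 ≤ n) (hψ : ∀ x, ω x = ψ ‖x‖)
    (hdiff : Differentiable ℝ ω) (hg : Differentiable ℝ (fderiv ℝ ω)) :
    ∀ u v, fderiv ℝ (fderiv ℝ ω) 0 u v
      = fderiv ℝ (fderiv ℝ ω) 0 (EuclideanSpace.single ⟨0, hn⟩ 1)
          (EuclideanSpace.single ⟨0, hn⟩ 1) * ⟪u, v⟫ := by
  set H0 := fderiv ℝ (fderiv ℝ ω) 0 with hH0
  set i₀ : Fin n := ⟨0, hn⟩ with hi₀
  set c : ℝ := H0 (EuclideanSpace.single i₀ 1) (EuclideanSpace.single i₀ 1) with hc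
  have hsymm : ∀ a b, H0 a b = H0 b a :=
    second_derivative_symmetric (fun y => (hdiff y).hasFDerivAt) (hg 0).hasFDerivAt
  have hsingle : ∀ i j : Fin n, i ≠ j →
      ⟪(EuclideanSpace.single i 1 : EuclideanSpace ℝ (Fin n)),
        EuclideanSpace.single j 1⟫ = 0 := by
    intro i j hij
    rw [EuclideanSpace.inner_single_left]
    simp [EuclideanSpace.single_apply, hij]
  have hdiag : ∀ i : Fin n, H0 (EuclideanSpace.single i 1)
      (EuclideanSpace.single i 1) = c := by
    intro i
    rcases eq_or_ne i i₀ with rfl | hi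
    · rfl
    have h1 : ⟪(EuclideanSpace.single i 1 + EuclideanSpace.single i₀ 1 :
        EuclideanSpace ℝ (Fin n)), EuclideanSpace.single i 1 - EuclideanSpace.single i₀ 1⟫
        = 0 := by
      rw [inner_add_left, inner_sub_right, inner_sub_right]
      rw [hsingle i i₀ hi, hsingle i₀ i (Ne.symm hi)]
      have e1 : ⟪(EuclideanSpace.single i 1 : EuclideanSpace ℝ (Fin n)),
          EuclideanSpace.single i 1⟫ = (1:ℝ) := by
        rw [real_inner_self_eq_norm_sq, EuclideanSpace.norm_single]; norm_num
      have e2 : ⟪(EuclideanSpace.single i₀ 1 : EuclideanSpace ℝ (Fin n)),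
          EuclideanSpace.single i₀ 1⟫ = (1:ℝ) := by
        rw [real_inner_self_eq_norm_sq, EuclideanSpace.norm_single]; norm_num
      rw [e1, e2]; ring
    have h2 := hessian_zero_offdiag hψ hdiff hg h1
    rw [map_add, ContinuousLinearMap.add_apply, map_sub, map_sub] at h2
    have h3 : H0 (EuclideanSpace.single i 1) (EuclideanSpace.single i₀ 1) = 0 :=
      hessian_zero_offdiag hψ hdiff hg (hsingle i i₀ hi)
    have h4 : H0 (EuclideanSpace.single i₀ 1) (EuclideanSpace.single i 1) = 0 :=
      hessian_zero_offdiag hψ hdiff hg (hsingle i₀ i (Ne.symm hi))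
    rw [hc]
    rw [← hH0] at h2
    linarith [h2]
  intro u v
  have hij : ∀ i j : Fin n, H0 (EuclideanSpace.single i 1) (EuclideanSpace.single j 1)
      = c * ⟪(EuclideanSpace.single i 1 : EuclideanSpace ℝ (Fin n)),
          EuclideanSpace.single j 1⟫ := by
    intro i j
    rcases eq_or_ne i j with rfl | hijne
    · rw [hdiag i, real_inner_self_eq_norm_sq, EuclideanSpace.norm_single]; norm_num
    · rw [hessian_zero_offdiag hψ hdiff hg (hsingle i j hijne), hsingle i j hijne]; ring
  have hu : u = ∑ i, u i • (EuclideanSpace.single i 1 : EuclideanSpace ℝ (Fin n)) := by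
    have := (EuclideanSpace.basisFun (Fin n) ℝ).sum_repr u
    simp only [EuclideanSpace.basisFun_repr, EuclideanSpace.basisFun_apply] at this
    exact this.symm
  have hv : v = ∑ j, v j • (EuclideanSpace.single j 1 : EuclideanSpace ℝ (Fin n)) := by
    have := (EuclideanSpace.basisFun (Fin n) ℝ).sum_repr v
    simp only [EuclideanSpace.basisFun_repr, EuclideanSpace.basisFun_apply] at this
    exact this.symm
  have hinner : ∀ i j : Fin n, ⟪(EuclideanSpace.single i 1 : EuclideanSpace ℝ (Fin n)),
      EuclideanSpace.single j 1⟫ = if j = i then (1:ℝ) else 0 := by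
    intro i j
    rw [EuclideanSpace.inner_single_left]
    simp [EuclideanSpace.single_apply, eq_comm]
  have step1 : ∀ i : Fin n, H0 (EuclideanSpace.single i 1) v = c * v i := by
    intro i
    conv_lhs => rw [hv]
    rw [map_sum]
    have : ∀ j : Fin n, H0 (EuclideanSpace.single i 1)
        (v j • (EuclideanSpace.single j 1 : EuclideanSpace ℝ (Fin n)))
        = (if j = i then v j * c else 0) := by
      intro j
      rw [map_smul, hij i j, hinner i j, smul_eq_mul]
      split_ifs <;> ring
    rw [Finset.sum_congr rfl fun j _ => this j]
    rw [Finset.sum_ite_eq' Finset.univ i (fun j => v j * c)]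
    simp [mul_comm]
  have step2 : H0 u v = ∑ i, u i * (c * v i) := by
    conv_lhs => rw [hu]
    rw [map_sum, ContinuousLinearMap.sum_apply]
    refine Finset.sum_congr rfl fun i _ => ?_
    rw [map_smul, ContinuousLinearMap.smul_apply, smul_eq_mul, step1 i]
  rw [step2, PiLp.inner_apply, Finset.mul_sum]
  refine Finset.sum_congr rfl fun i _ => ?_
  simp [RCLike.inner_apply]
  ring

end Zero

set_option maxHeartbeats 1000000 in
set_option synthInstance.maxHeartbeats 400000 in
theorem stmt8 (n : ℕ) (hn : 1 ≤ n) (ω : EuclideanSpace ℝ (Fin n) → ℝ)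
    (hrad : ∃ ψ : ℝ → ℝ, ∀ x, ω x = ψ ‖x‖)
    (htd : ∀ p, TwiceDiffAt ω p)
    (hlap : Continuous (fun x => lap ω x)) :
    ContDiff ℝ 2 ω := by
  obtain ⟨ψ, hψ⟩ := hrad
  have hdiff : Differentiable ℝ ω := fun p => ((htd p).1).self_of_nhds
  have hg : Differentiable ℝ (fderiv ℝ ω) := fun p => (htd p).2.1
  set H : EuclideanSpace ℝ (Fin n) → EuclideanSpace ℝ (Fin n) →L[ℝ]
      EuclideanSpace ℝ (Fin n) →L[ℝ] ℝ := fderiv ℝ (fderiv ℝ ω) with hH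
  set c : ℝ := H 0 (EuclideanSpace.single ⟨0, hn⟩ 1) (EuclideanSpace.single ⟨0, hn⟩ 1)
    with hcdef
  have hH0 : ∀ u v, H 0 u v = c * ⟪u, v⟫ := hessian_zero_eq hn hψ hdiff hg
  -- the Laplacian at 0
  have hlap0 : lap ω 0 = n * c := by
    rw [lap_eq_trace hg 0]
    have hd : ∀ i : Fin n, H 0 (EuclideanSpace.single i 1)
        (EuclideanSpace.single i 1) = c := by
      intro i
      rw [hH0, real_inner_self_eq_norm_sq, EuclideanSpace.norm_single]
      norm_num
    rw [Finset.sum_congr rfl fun i _ => hd i]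
    simp [Finset.sum_const, Finset.card_univ, mul_comm]
  -- F tends to c at 0
  have hg00 : fderiv ℝ ω 0 = 0 := grad_zero hψ hdiff
  have hFlim : Tendsto (Fr ω) (𝓝[≠] (0 : EuclideanSpace ℝ (Fin n))) (𝓝 c) := by
    rw [tendsto_iff_norm_sub_tendsto_zero]
    have hT := hasFDerivAt_iff_tendsto.1 (hg 0).hasFDerivAt
    refine squeeze_zero_norm' ?_ (hT.mono_left nhdsWithin_le_nhds)
    filter_upwards [self_mem_nhdsWithin] with y hy
    have hy0 : y ≠ 0 := hy
    have hyn : ‖y‖ ≠ 0 := norm_ne_zero_iff.2 hy0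
    have hypos : (0:ℝ) < ‖y‖ ^ 2 := by positivity
    have e1 : H 0 y y = c * ‖y‖ ^ 2 := by rw [hH0, real_inner_self_eq_norm_sq]
    have e2 : Fr ω y - c = (fderiv ℝ ω y y - H 0 y y) / ‖y‖ ^ 2 := by
      rw [e1, Fr]; field_simp
    have e3 : |fderiv ℝ ω y y - H 0 y y| ≤ ‖fderiv ℝ ω y - H 0 y‖ * ‖y‖ := by
      have := (fderiv ℝ ω y - H 0 y).le_opNorm y
      simpa [ContinuousLinearMap.sub_apply, Real.norm_eq_abs] using this
    have key : ‖Fr ω y - c‖ ≤ ‖y - 0‖⁻¹ * ‖fderiv ℝ ω y - fderiv ℝ ω 0 - H 0 (y - 0)‖ := by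
      rw [sub_zero, hg00, sub_zero, Real.norm_eq_abs, e2, abs_div,
        abs_of_nonneg (le_of_lt hypos), div_le_iff₀ hypos]
      calc |fderiv ℝ ω y y - H 0 y y| ≤ ‖fderiv ℝ ω y - H 0 y‖ * ‖y‖ := e3
        _ = ‖y‖⁻¹ * ‖fderiv ℝ ω y - H 0 y‖ * ‖y‖ ^ 2 := by field_simp
    simpa [← hH] using key
  -- continuity at 0
  have hcont0 : ContinuousAt H 0 := by
    rw [← continuousWithinAt_compl_self]
    have : Tendsto H (𝓝[≠] (0 : EuclideanSpace ℝ (Fin n))) (𝓝 (H 0)) := by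
      refine (tendsto_iff_norm_sub_tendsto_zero (f := H) (b := H 0)).mpr ?_
      refine squeeze_zero_norm'
        (t₀ := 𝓝[≠] (0 : EuclideanSpace ℝ (Fin n)))
        (a := fun y => |lap ω y - n * Fr ω y| + |Fr ω y - c|) ?_ ?_
      · filter_upwards [self_mem_nhdsWithin] with y hy
        have hy0 : y ≠ 0 := hy
        have hyn2 : (‖y‖ : ℝ) ^ 2 ≠ 0 := pow_ne_zero _ (norm_ne_zero_iff.2 hy0)
        rw [norm_norm]
        refine ContinuousLinearMap.opNorm_le_bound _ (by positivity) (fun u => ?_)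
        refine ContinuousLinearMap.opNorm_le_bound _ (by positivity) (fun v => ?_)
        have hval : (H y - H 0) u v = ((lap ω y - n * Fr ω y) / ‖y‖ ^ 2)
            * (⟪y, u⟫ * ⟪y, v⟫) + (Fr ω y - c) * ⟪u, v⟫ := by
          simp only [ContinuousLinearMap.sub_apply]
          rw [hessian_final hψ hdiff hg hy0 u v, hH0 u v]
          ring
        rw [hval, Real.norm_eq_abs]
        set a : ℝ := (lap ω y - n * Fr ω y) / ‖y‖ ^ 2 with hadef
        set b : ℝ := Fr ω y - c with hbdef
        have cs1 : |⟪y, u⟫| ≤ ‖y‖ * ‖u‖ := abs_real_inner_le_norm y u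
        have cs2 : |⟪y, v⟫| ≤ ‖y‖ * ‖v‖ := abs_real_inner_le_norm y v
        have cs3 : |⟪u, v⟫| ≤ ‖u‖ * ‖v‖ := abs_real_inner_le_norm u v
        have e6 : |a * (⟪y, u⟫ * ⟪y, v⟫) + b * ⟪u, v⟫|
            ≤ |a| * (|⟪y, u⟫| * |⟪y, v⟫|) + |b| * |⟪u, v⟫| := by
          refine le_trans (abs_add_le _ _) ?_
          rw [abs_mul, abs_mul, abs_mul]
        have e9 : |a| * (|⟪y, u⟫| * |⟪y, v⟫|)
            ≤ |a| * ((‖y‖ * ‖u‖) * (‖y‖ * ‖v‖)) := by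
          refine mul_le_mul_of_nonneg_left ?_ (abs_nonneg a)
          exact mul_le_mul cs1 cs2 (abs_nonneg _) (by positivity)
        have e10 : |b| * |⟪u, v⟫| ≤ |b| * (‖u‖ * ‖v‖) :=
          mul_le_mul_of_nonneg_left cs3 (abs_nonneg b)
        have e11 : |a| * ‖y‖ ^ 2 = |lap ω y - n * Fr ω y| := by
          rw [hadef, abs_div, abs_of_nonneg (by positivity : (0:ℝ) ≤ ‖y‖ ^ 2)]
          field_simp
        have e12 : |a| * ((‖y‖ * ‖u‖) * (‖y‖ * ‖v‖))
            = |lap ω y - n * Fr ω y| * (‖u‖ * ‖v‖) := by rw [← e11]; ring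
        have e13 : (|lap ω y - n * Fr ω y| + |b|) * ‖u‖ * ‖v‖
            = |lap ω y - n * Fr ω y| * (‖u‖ * ‖v‖) + |b| * (‖u‖ * ‖v‖) := by ring
        linarith [e6, e9, e10, e12, e13]
      · have t1 : Tendsto (fun y => |lap ω y - n * Fr ω y|)
            (𝓝[≠] (0 : EuclideanSpace ℝ (Fin n))) (𝓝 0) := by
          have := ((hlap.tendsto 0).mono_left
            (nhdsWithin_le_nhds (s := {(0 : EuclideanSpace ℝ (Fin n))}ᶜ))).sub
            (hFlim.const_mul (n : ℝ))
          rw [hlap0] at this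
          simpa using this.abs
        have t2 : Tendsto (fun y => |Fr ω y - c|)
            (𝓝[≠] (0 : EuclideanSpace ℝ (Fin n))) (𝓝 0) := by
          have := (hFlim.sub (tendsto_const_nhds (x := c))).abs
          simpa using this
        simpa using t1.add t2
    exact this
  -- continuity away from 0
  have hcontne : ∀ x : EuclideanSpace ℝ (Fin n), x ≠ 0 → ContinuousAt H x := by
    intro x hx0
    set K : EuclideanSpace ℝ (Fin n) → EuclideanSpace ℝ (Fin n) →L[ℝ]
        EuclideanSpace ℝ (Fin n) →L[ℝ] ℝ := fun y =>
      ((lap ω y - n * Fr ω y) / ‖y‖ ^ 2) • ((rinnerSL n y).smulRight (rinnerSL n y))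
        + Fr ω y • rinnerSL n with hKdef
    have hKC : ContinuousAt K x := by
      have hFc : ContinuousAt (Fr ω) x := (Fr_diffAt hg hx0).continuousAt
      have hnc : ContinuousAt (fun y : EuclideanSpace ℝ (Fin n) => ‖y‖ ^ 2) x :=
        ((continuous_norm).pow 2).continuousAt
      have hac : ContinuousAt (fun y => (lap ω y - n * Fr ω y) / ‖y‖ ^ 2) x := by
        refine ContinuousAt.div ?_ hnc (pow_ne_zero _ (norm_ne_zero_iff.2 hx0))
        exact (hlap.continuousAt).sub (hFc.const_smul (n:ℝ))
      have hBc : Continuous (fun y : EuclideanSpace ℝ (Fin n) =>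
          (rinnerSL n y).smulRight (rinnerSL n y)) := by
        have hrw : (fun y : EuclideanSpace ℝ (Fin n) =>
            (rinnerSL n y).smulRight (rinnerSL n y))
            = fun y => (ContinuousLinearMap.smulRightL ℝ (EuclideanSpace ℝ (Fin n))
                (EuclideanSpace ℝ (Fin n) →L[ℝ] ℝ)) (rinnerSL n y) (rinnerSL n y) := rfl
        rw [hrw]
        refine Continuous.clm_apply ?_ (rinnerSL n).continuous
        exact ((ContinuousLinearMap.smulRightL ℝ _ _).continuous).comp (rinnerSL n).continuous
      haveI : ContinuousAdd (EuclideanSpace ℝ (Fin n) →L[ℝ] EuclideanSpace ℝ (Fin n) →L[ℝ] ℝ) :=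
        (inferInstance : IsTopologicalAddGroup (EuclideanSpace ℝ (Fin n) →L[ℝ] EuclideanSpace ℝ (Fin n) →L[ℝ] ℝ)).toContinuousAdd
      exact (hac.smul hBc.continuousAt).add (hFc.smul continuousAt_const)
    refine hKC.congr ?_
    filter_upwards [isOpen_compl_singleton.mem_nhds hx0] with y hy
    have hy0 : y ≠ 0 := hy
    have : H y = K y := by
      ext u v
      rw [hessian_final hψ hdiff hg hy0 u v, hKdef]
      simp only [ContinuousLinearMap.add_apply, ContinuousLinearMap.smul_apply,
        ContinuousLinearMap.smulRight_apply, rinnerSL_apply, smul_eq_mul]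
      try ring
    exact this.symm
  have hHcont : Continuous H := by
    rw [continuous_iff_continuousAt]
    intro x
    rcases eq_or_ne x 0 with rfl | hx0
    · exact hcont0
    · exact hcontne x hx0
  -- assemble
  have h21 : (2 : WithTop ℕ∞) = 1 + 1 := by norm_num
  rw [h21, contDiff_succ_iff_fderiv]
  refine ⟨hdiff, by simp, ?_⟩
  rw [contDiff_one_iff_fderiv]
  exact ⟨hg, hHcont⟩
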